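/- Let m₀ ∈ L^∞(Ω) with ∫_Ω m₀ dx > 0 and |{m₀ < 0}| > 0, let γ ∈ (0,|Ω|) satisfy ∫_γ^{|Ω|} m₀* ds = 0 and let m̄₀ be as above. Then for every nonnegative m ∈ L^∞(Ω) with m ≺ m₀, one has |{x : m̄₀(x) > 0}| ≤ |{x : m(x) > 0}|. -/

import Mathlib

open MeasureTheory Set Filter Topology
open scoped ENNReal

noncomputable section

/-- Distribution function `d_f(t) = |{x ∈ Ω : f x > t}|`. -/
def distrib {N : ℕ} (Ω : Set (Fin N → ℝ)) (f : (Fin N → ℝ) → ℝ) (t : ℝ) : ℝ≥0∞ :=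
  volume {x ∈ Ω | t < f x}

/-- Equimeasurability of two functions on `Ω`. -/
def EquiMeas {N : ℕ} (Ω : Set (Fin N → ℝ)) (f g : (Fin N → ℝ) → ℝ) : Prop :=
  ∀ t : ℝ, distrib Ω f t = distrib Ω g t

/-- Decreasing rearrangement `f*(s) = sup {t : d_f(t) > s}`. -/
def decRearr {N : ℕ} (Ω : Set (Fin N → ℝ)) (f : (Fin N → ℝ) → ℝ) (s : ℝ) : ℝ :=
  sSup {t : ℝ | ENNReal.ofReal s < distrib Ω f t}

/-- Hardy–Littlewood–Pólya order `g ≺ f`. -/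
def Prec {N : ℕ} (Ω : Set (Fin N → ℝ)) (g f : (Fin N → ℝ) → ℝ) : Prop :=
  (∀ t ∈ Icc (0 : ℝ) (volume Ω).toReal,
      ∫ s in Ioo (0 : ℝ) t, decRearr Ω g s ≤ ∫ s in Ioo (0 : ℝ) t, decRearr Ω f s) ∧
  ∫ s in Ioo (0 : ℝ) (volume Ω).toReal, decRearr Ω g s
    = ∫ s in Ioo (0 : ℝ) (volume Ω).toReal, decRearr Ω f s

namespace TruncAux

variable {N : ℕ} (Ω : Set (Fin N → ℝ)) (f : (Fin N → ℝ) → ℝ)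

lemma distrib_anti {t₁ t₂ : ℝ} (h : t₁ ≤ t₂) : distrib Ω f t₂ ≤ distrib Ω f t₁ :=
  measure_mono fun x hx => ⟨hx.1, lt_of_le_of_lt h hx.2⟩

lemma distrib_eq_restrict (hΩ : MeasurableSet Ω) (hf : Measurable f) (t : ℝ) :
    distrib Ω f t = volume.restrict Ω {x | t < f x} := by
  have hs : {x ∈ Ω | t < f x} = {x | t < f x} ∩ Ω := by
    ext x
    exact ⟨fun h => ⟨h.2, h.1⟩, fun h => ⟨h.2, h.1⟩⟩
  unfold distrib
  rw [hs, Measure.restrict_apply (measurableSet_lt measurable_const hf)]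

lemma distrib_zero_of_bound (hΩ : MeasurableSet Ω) (hf : Measurable f) {C t : ℝ}
    (hb : ∀ᵐ x ∂(volume.restrict Ω), |f x| ≤ C) (ht : C ≤ t) :
    distrib Ω f t = 0 := by
  rw [distrib_eq_restrict Ω f hΩ hf]
  refine measure_eq_zero_iff_ae_notMem.2 ?_
  filter_upwards [hb] with x hx
  simp only [mem_setOf_eq, not_lt]
  exact le_trans (le_trans (le_abs_self _) hx) ht

lemma distrib_full_of_bound (hΩ : MeasurableSet Ω) (hf : Measurable f) {L t : ℝ}
    (hb : ∀ᵐ x ∂(volume.restrict Ω), L ≤ f x) (ht : t < L) :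
    distrib Ω f t = volume Ω := by
  rw [distrib_eq_restrict Ω f hΩ hf]
  have h1 : {x | t < f x} =ᵐ[volume.restrict Ω] univ := by
    rw [ae_eq_univ]
    refine measure_eq_zero_iff_ae_notMem.2 ?_
    filter_upwards [hb] with x hx
    simp only [mem_compl_iff, mem_setOf_eq, not_not]
    exact lt_of_lt_of_le ht hx
  rw [measure_congr h1, Measure.restrict_apply_univ]

lemma bddAbove_decSet (hΩ : MeasurableSet Ω) (hf : Measurable f) {C : ℝ}
    (hb : ∀ᵐ x ∂(volume.restrict Ω), |f x| ≤ C) (s : ℝ) :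
    BddAbove {t : ℝ | ENNReal.ofReal s < distrib Ω f t} := by
  refine ⟨C, fun t ht => ?_⟩
  by_contra hlt
  push_neg at hlt
  rw [mem_setOf_eq, distrib_zero_of_bound Ω f hΩ hf hb hlt.le] at ht
  simp at ht

lemma decRearr_le_of_bound (hΩ : MeasurableSet Ω) (hf : Measurable f) {C : ℝ} (hC : 0 ≤ C)
    (hb : ∀ᵐ x ∂(volume.restrict Ω), |f x| ≤ C) (s : ℝ) :
    decRearr Ω f s ≤ C := by
  refine Real.sSup_le (fun t ht => ?_) hC
  by_contra hlt
  push_neg at hlt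
  rw [mem_setOf_eq, distrib_zero_of_bound Ω f hΩ hf hb hlt.le] at ht
  simp at ht

end TruncAux

open TruncAux

theorem truncated_weight_minimal_support
    (N : ℕ) (Ω : Set (Fin N → ℝ)) (hΩo : IsOpen Ω) (hΩb : Bornology.IsBounded Ω)
    (m₀ : (Fin N → ℝ) → ℝ) (hm₀ : Measurable m₀)
    (hm₀b : ∃ C : ℝ, ∀ᵐ x ∂(volume.restrict Ω), |m₀ x| ≤ C)
    (hm₀int : 0 < ∫ x in Ω, m₀ x)
    (hm₀neg : 0 < volume {x ∈ Ω | m₀ x < 0})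
    (γ : ℝ) (hγ : γ ∈ Ioo (0 : ℝ) (volume Ω).toReal)
    (hγ0 : ∫ s in Ioo γ (volume Ω).toReal, decRearr Ω m₀ s = 0)
    (E : Set (Fin N → ℝ)) (hE : MeasurableSet E) (hEΩ : E ⊆ Ω)
    (hEvol : volume E = ENNReal.ofReal γ)
    (hE1 : ∀ s ∈ Ioo (0 : ℝ) γ, decRearr Ω (E.indicator m₀) s = decRearr Ω m₀ s)
    (hE2 : ∀ s ∈ Ico γ (volume Ω).toReal, decRearr Ω (E.indicator m₀) s = 0)
    (m : (Fin N → ℝ) → ℝ) (hm : Measurable m)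
    (hmb : ∃ C : ℝ, ∀ᵐ x ∂(volume.restrict Ω), |m x| ≤ C)
    (hmnonneg : ∀ᵐ x ∂(volume.restrict Ω), 0 ≤ m x)
    (hprec : Prec Ω m m₀) :
    volume {x ∈ Ω | 0 < E.indicator m₀ x} ≤ volume {x ∈ Ω | 0 < m x} := by
  classical
  set T : ℝ := (volume Ω).toReal with hTdef
  obtain ⟨C₀, hC₀⟩ := hm₀b
  obtain ⟨C₁, hC₁⟩ := hmb
  set C : ℝ := max (max C₀ C₁) 0 with hCdef
  have hC0 : (0:ℝ) ≤ C := le_max_right _ _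
  have hCm₀ : ∀ᵐ x ∂(volume.restrict Ω), |m₀ x| ≤ C := by
    filter_upwards [hC₀] with x hx
    exact hx.trans (le_max_of_le_left (le_max_left _ _))
  have hCm : ∀ᵐ x ∂(volume.restrict Ω), |m x| ≤ C := by
    filter_upwards [hC₁] with x hx
    exact hx.trans (le_max_of_le_left (le_max_right _ _))
  have hCind : ∀ᵐ x ∂(volume.restrict Ω), |E.indicator m₀ x| ≤ C := by
    filter_upwards [hCm₀] with x hx
    refine le_trans ?_ hx
    by_cases hxE : x ∈ E
    · rw [indicator_of_mem hxE]
    · rw [indicator_of_notMem hxE]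
      simp [abs_nonneg]
  have hΩm : MeasurableSet Ω := hΩo.measurableSet
  have hind : Measurable (E.indicator m₀) := hm₀.indicator hE
  have hvolfin : volume Ω ≠ ⊤ := hΩb.measure_lt_top.ne
  have hTΩ : volume Ω = ENNReal.ofReal T := (ENNReal.ofReal_toReal hvolfin).symm
  have hT0 : 0 < T := hγ.1.trans hγ.2
  have hfull_m₀ : ∀ t : ℝ, t < -C → distrib Ω m₀ t = volume Ω := by
    intro t ht
    refine distrib_full_of_bound Ω m₀ hΩm hm₀ (L := -C) ?_ ht
    filter_upwards [hCm₀] with x hx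
    exact neg_le_of_abs_le hx
  have hfull_m : ∀ t : ℝ, t < 0 → distrib Ω m t = volume Ω := fun t ht =>
    distrib_full_of_bound Ω m hΩm hm (L := 0) hmnonneg ht
  have hlt_vol : ∀ s : ℝ, s < T → ENNReal.ofReal s < volume Ω := by
    intro s hs
    rw [hTΩ]
    exact (ENNReal.ofReal_lt_ofReal_iff hT0).2 hs
  have hne_m₀ : ∀ s : ℝ, s < T → (-C - 1) ∈ {t : ℝ | ENNReal.ofReal s < distrib Ω m₀ t} := by
    intro s hs
    rw [mem_setOf_eq, hfull_m₀ _ (by linarith)]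
    exact hlt_vol s hs
  have hbdd_m₀ : ∀ s : ℝ, BddAbove {t : ℝ | ENNReal.ofReal s < distrib Ω m₀ t} :=
    fun s => bddAbove_decSet Ω m₀ hΩm hm₀ hCm₀ s
  have hbdd_ind : ∀ s : ℝ, BddAbove {t : ℝ | ENNReal.ofReal s < distrib Ω (E.indicator m₀) t} :=
    fun s => bddAbove_decSet Ω _ hΩm hind hCind s
  have hanti : ∀ s₁ s₂ : ℝ, s₁ ≤ s₂ → s₂ < T → decRearr Ω m₀ s₂ ≤ decRearr Ω m₀ s₁ := by
    intro s₁ s₂ h12 h2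
    refine csSup_le_csSup (hbdd_m₀ s₁) ⟨_, hne_m₀ s₂ h2⟩ ?_
    intro t ht
    exact lt_of_le_of_lt (ENNReal.ofReal_le_ofReal h12) ht
  have hbound_m₀ : ∀ s : ℝ, decRearr Ω m₀ s ≤ C :=
    decRearr_le_of_bound Ω m₀ hΩm hm₀ hC0 hCm₀
  have hlb_m₀ : ∀ s : ℝ, s < T → -C ≤ decRearr Ω m₀ s := by
    intro s hs
    have h := csSup_le_csSup (hbdd_m₀ s) (nonempty_Iio (a := -C)) ?_
    · rwa [csSup_Iio] at h
    · intro t ht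
      rw [mem_setOf_eq, hfull_m₀ t ht]
      exact hlt_vol s hs
  -- integrability of the rearrangement of m₀
  have hmeas_m₀ : AEMeasurable (decRearr Ω m₀) (volume.restrict (Ioo 0 T)) := by
    refine aemeasurable_restrict_of_antitoneOn measurableSet_Ioo ?_
    intro s₁ _ s₂ h2 h12
    exact hanti s₁ s₂ h12 h2.2
  have hint_Ioo : IntegrableOn (decRearr Ω m₀) (Ioo 0 T) volume := by
    have hconst : IntegrableOn (fun _ : ℝ => C) (Ioo 0 T) volume :=
      integrableOn_const (by simp [Real.volume_Ioo])
    refine Integrable.mono' hconst hmeas_m₀.aestronglyMeasurable ?_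
    refine (ae_restrict_iff' measurableSet_Ioo).2 (ae_of_all _ fun s hs => ?_)
    rw [Real.norm_eq_abs, abs_le]
    exact ⟨hlb_m₀ s hs.2, hbound_m₀ s⟩
  have hint_Ioc : IntegrableOn (decRearr Ω m₀) (Ioc 0 T) volume := by
    rw [IntegrableOn, ← Measure.restrict_congr_set Ioo_ae_eq_Ioc]
    exact hint_Ioo
  have hII : ∀ x y : ℝ, 0 ≤ x → x ≤ T → 0 ≤ y → y ≤ T →
      IntervalIntegrable (decRearr Ω m₀) volume x y := by
    intro x y hx hxT hy hyT
    exact ⟨hint_Ioc.mono_set (Ioc_subset_Ioc hx hyT), hint_Ioc.mono_set (Ioc_subset_Ioc hy hxT)⟩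
  have hconv : ∀ x y : ℝ, x ≤ y →
      ∫ s in Ioo x y, decRearr Ω m₀ s = ∫ s in x..y, decRearr Ω m₀ s := by
    intro x y hxy
    rw [intervalIntegral.integral_of_le hxy, integral_Ioc_eq_integral_Ioo]
  -- nonnegativity of m₀* below γ
  have hnonneg_m₀ : ∀ s : ℝ, s ≤ γ → 0 ≤ decRearr Ω m₀ s := by
    intro s₀ hs₀
    by_contra hneg
    push_neg at hneg
    have hle : ∫ s in Ioo γ T, decRearr Ω m₀ s ≤ ∫ s in Ioo γ T, decRearr Ω m₀ s₀ := by
      refine setIntegral_mono_on (hint_Ioo.mono_set (Ioo_subset_Ioo hγ.1.le le_rfl))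
        (integrableOn_const (by simp [Real.volume_Ioo])) measurableSet_Ioo ?_
      intro s hs
      exact hanti s₀ s (hs₀.trans hs.1.le) hs.2
    rw [hγ0, setIntegral_const, measureReal_def, Real.volume_Ioo,
      ENNReal.toReal_ofReal (by linarith [hγ.2] : (0:ℝ) ≤ T - γ), smul_eq_mul] at hle
    nlinarith [hγ.2]
  -- main argument by contradiction
  by_contra hcon
  push_neg at hcon
  set A := volume {x ∈ Ω | 0 < E.indicator m₀ x} with hA
  set B := volume {x ∈ Ω | 0 < m x} with hB
  have hAE : A ≤ ENNReal.ofReal γ := by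
    rw [← hEvol]
    refine measure_mono fun x hx => ?_
    by_contra hxE
    have hx2 : 0 < E.indicator m₀ x := hx.2
    rw [indicator_of_notMem hxE m₀] at hx2
    exact lt_irrefl 0 hx2
  have hAfin : A ≠ ⊤ := (lt_of_le_of_lt hAE ENNReal.ofReal_lt_top).ne
  have hBfin : B ≠ ⊤ := ((hcon.trans_le hAE).trans ENNReal.ofReal_lt_top).ne
  set a := A.toReal with ha
  set b := B.toReal with hb
  have hba : b < a := (ENNReal.toReal_lt_toReal hBfin hAfin).2 hcon
  have haγ : a ≤ γ := by
    have h := ENNReal.toReal_mono ENNReal.ofReal_ne_top hAE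
    rwa [ENNReal.toReal_ofReal hγ.1.le] at h
  have hb0 : (0:ℝ) ≤ b := ENNReal.toReal_nonneg
  have hbT : b ≤ T := ENNReal.toReal_mono hvolfin (measure_mono fun x hx => hx.1)
  have hBb : B = ENNReal.ofReal b := (ENNReal.ofReal_toReal hBfin).symm
  have hB0 : distrib Ω m 0 = B := rfl
  -- the rearrangement of m vanishes on [b, T)
  have hmzero : ∀ s : ℝ, b ≤ s → s < T → decRearr Ω m s = 0 := by
    intro s hbs hsT
    have hset : {t : ℝ | ENNReal.ofReal s < distrib Ω m t} = Iio 0 := by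
      ext t
      simp only [mem_setOf_eq, mem_Iio]
      constructor
      · intro ht
        by_contra h0
        push_neg at h0
        have h1 : distrib Ω m t ≤ B := by
          rw [← hB0]; exact distrib_anti Ω m h0
        have h2 : B ≤ ENNReal.ofReal s := by
          rw [hBb]; exact ENNReal.ofReal_le_ofReal hbs
        exact absurd ht (not_lt.2 (h1.trans h2))
      · intro ht
        rw [hfull_m t ht]
        exact hlt_vol s hsT
    rw [decRearr, hset, csSup_Iio]
  have hIm : ∫ s in Ioo (0:ℝ) T, decRearr Ω m s = ∫ s in Ioo (0:ℝ) b, decRearr Ω m s := by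
    have h1 : EqOn (decRearr Ω m) ((Ioo (0:ℝ) b).indicator (decRearr Ω m)) (Ioo 0 T) := by
      intro s hs
      by_cases hsb : s < b
      · exact (Set.indicator_of_mem (show s ∈ Ioo (0:ℝ) b from ⟨hs.1, hsb⟩) (decRearr Ω m)).symm
      · rw [indicator_of_notMem (fun hmem => hsb hmem.2), hmzero s (not_lt.1 hsb) hs.2]
    rw [setIntegral_congr_fun measurableSet_Ioo h1, setIntegral_indicator measurableSet_Ioo,
      inter_eq_self_of_subset_right (Ioo_subset_Ioo le_rfl hbT)]
  -- the midpoint c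
  set c := (b + a) / 2 with hc
  have hbc : b < c := by simp only [hc]; linarith
  have hca : c < a := by simp only [hc]; linarith
  have hc0 : 0 < c := lt_of_le_of_lt hb0 hbc
  have hcγ : c < γ := lt_of_lt_of_le hca haγ
  have hcT : c < T := hcγ.trans hγ.2
  -- positivity of the rearrangement of the truncation at c
  have hApos : ENNReal.ofReal c < A := by
    rw [← ENNReal.ofReal_toReal hAfin]
    exact (ENNReal.ofReal_lt_ofReal_iff (lt_of_le_of_lt hb0 hba)).2 hca
  have hAsup : A = ⨆ n : ℕ, distrib Ω (E.indicator m₀) (1 / (n + 1)) := by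
    have hU : {x ∈ Ω | 0 < E.indicator m₀ x}
        = ⋃ n : ℕ, {x ∈ Ω | 1 / (n + 1 : ℝ) < E.indicator m₀ x} := by
      ext x
      simp only [mem_sep_iff, mem_iUnion]
      constructor
      · rintro ⟨hxΩ, hx⟩
        obtain ⟨n, hn⟩ := exists_nat_one_div_lt hx
        exact ⟨n, hxΩ, hn⟩
      · rintro ⟨n, hxΩ, hn⟩
        exact ⟨hxΩ, lt_trans (by positivity) hn⟩
    rw [hA, hU]
    refine Directed.measure_iUnion (Monotone.directed_le fun i j hij => ?_)
    intro x hx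
    refine ⟨hx.1, lt_of_le_of_lt ?_ hx.2⟩
    have hij' : (i:ℝ) ≤ j := Nat.cast_le.2 hij
    apply one_div_le_one_div_of_le (by positivity)
    linarith
  obtain ⟨n, hn⟩ : ∃ n : ℕ, ENNReal.ofReal c < distrib Ω (E.indicator m₀) (1 / (n + 1)) := by
    rw [hAsup] at hApos
    exact lt_iSup_iff.1 hApos
  have hind_pos : 0 < decRearr Ω (E.indicator m₀) c := by
    have hle : (1 : ℝ) / (n + 1) ≤ decRearr Ω (E.indicator m₀) c := le_csSup (hbdd_ind c) hn
    exact lt_of_lt_of_le (by positivity) hle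
  have hm₀c : 0 < decRearr Ω m₀ c := by
    rw [← hE1 c ⟨hc0, hcγ⟩]
    exact hind_pos
  -- integral estimates
  have hJbc : (c - b) * decRearr Ω m₀ c ≤ ∫ s in (b:ℝ)..c, decRearr Ω m₀ s := by
    rw [intervalIntegral.integral_of_le hbc.le]
    have h := setIntegral_mono_on
      (integrableOn_const (by simp [Real.volume_Ioc] : volume (Ioc b c) ≠ ⊤))
      (hint_Ioc.mono_set (Ioc_subset_Ioc hb0 hcT.le)) measurableSet_Ioc
      (fun s hs => hanti s c hs.2 hcT)
    rwa [setIntegral_const, measureReal_def, Real.volume_Ioc,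
      ENNReal.toReal_ofReal (by linarith : (0:ℝ) ≤ c - b), smul_eq_mul] at h
  have hJcγ : 0 ≤ ∫ s in (c:ℝ)..γ, decRearr Ω m₀ s := by
    rw [intervalIntegral.integral_of_le hcγ.le]
    exact setIntegral_nonneg measurableSet_Ioc fun s hs => hnonneg_m₀ s hs.2
  have hsplit1 : (∫ s in (0:ℝ)..b, decRearr Ω m₀ s) + ∫ s in (b:ℝ)..γ, decRearr Ω m₀ s
      = ∫ s in (0:ℝ)..γ, decRearr Ω m₀ s :=
    intervalIntegral.integral_add_adjacent_intervals
      (hII 0 b le_rfl hT0.le hb0 hbT) (hII b γ hb0 hbT hγ.1.le hγ.2.le)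
  have hsplit2 : (∫ s in (0:ℝ)..γ, decRearr Ω m₀ s) + ∫ s in (γ:ℝ)..T, decRearr Ω m₀ s
      = ∫ s in (0:ℝ)..T, decRearr Ω m₀ s :=
    intervalIntegral.integral_add_adjacent_intervals
      (hII 0 γ le_rfl hT0.le hγ.1.le hγ.2.le) (hII γ T hγ.1.le hγ.2.le hT0.le le_rfl)
  have hsplit3 : (∫ s in (b:ℝ)..c, decRearr Ω m₀ s) + ∫ s in (c:ℝ)..γ, decRearr Ω m₀ s
      = ∫ s in (b:ℝ)..γ, decRearr Ω m₀ s :=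
    intervalIntegral.integral_add_adjacent_intervals
      (hII b c hb0 hbT hc0.le hcT.le) (hII c γ hc0.le hcT.le hγ.1.le hγ.2.le)
  -- assemble
  have hP1 : ∫ s in Ioo (0:ℝ) b, decRearr Ω m s ≤ ∫ s in Ioo (0:ℝ) b, decRearr Ω m₀ s :=
    hprec.1 b ⟨hb0, hbT⟩
  have hP2 : ∫ s in Ioo (0:ℝ) T, decRearr Ω m s = ∫ s in Ioo (0:ℝ) T, decRearr Ω m₀ s :=
    hprec.2
  have hγ0' : ∫ s in (γ:ℝ)..T, decRearr Ω m₀ s = 0 := by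
    rw [← hconv γ T hγ.2.le]
    exact hγ0
  have hkey : ∫ s in (0:ℝ)..T, decRearr Ω m₀ s ≤ ∫ s in (0:ℝ)..b, decRearr Ω m₀ s := by
    rw [← hconv 0 T hT0.le, ← hconv 0 b hb0, ← hP2, hIm]
    exact hP1
  have hpos : 0 < (c - b) * decRearr Ω m₀ c := mul_pos (by linarith) hm₀c
  linarith
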